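/- For every even integer m ≥ 2, the complete graph K_m admits a decomposition of its edge set into m/2 Hamiltonian paths. -/

import Mathlib

open SimpleGraph

private lemma cast_inj_lt {m a b : ℕ} (ha : a < m) (hb : b < m)
    (h : (a : ZMod m) = (b : ZMod m)) : a = b := by
  rw [ZMod.natCast_eq_natCast_iff'] at h
  rwa [Nat.mod_eq_of_lt ha, Nat.mod_eq_of_lt hb] at h

private lemma cast_zero_dvd {m c : ℕ} (h : ((c : ℕ) : ZMod m) = 0) : m ∣ c :=
  (ZMod.natCast_eq_zero_iff c m).mp h

/-- zigzag sequence in `ZMod m` -/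
private def zig (m j : ℕ) : ZMod m := if Even j then -((j/2 : ℕ) : ZMod m) else (((j+1)/2 : ℕ) : ZMod m)

private lemma zig_inj {n : ℕ} (hn : 0 < n) {a b : ℕ} (ha : a < 2*n) (hb : b < 2*n)
    (h : zig (2*n) a = zig (2*n) b) : a = b := by
  unfold zig at h
  by_cases pa : Even a <;> by_cases pb : Even b
  · rw [if_pos pa, if_pos pb] at h
    rw [Nat.even_iff] at pa pb
    have := cast_inj_lt (m := 2*n) (a := a/2) (b := b/2) (by omega) (by omega) (neg_injective h)
    omega
  · rw [if_pos pa, if_neg pb] at h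
    rw [Nat.even_iff] at pa; rw [Nat.not_even_iff] at pb
    exfalso
    have h0 : (((a/2 + (b+1)/2 : ℕ)) : ZMod (2*n)) = 0 := by push_cast; linear_combination -h
    have hle := Nat.le_of_dvd (by omega) (cast_zero_dvd h0)
    omega
  · rw [if_neg pa, if_pos pb] at h
    rw [Nat.not_even_iff] at pa; rw [Nat.even_iff] at pb
    exfalso
    have h0 : (((b/2 + (a+1)/2 : ℕ)) : ZMod (2*n)) = 0 := by push_cast; linear_combination h
    have hle := Nat.le_of_dvd (by omega) (cast_zero_dvd h0)
    omega
  · rw [if_neg pa, if_neg pb] at h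
    rw [Nat.not_even_iff] at pa pb
    have := cast_inj_lt (m := 2*n) (a := (a+1)/2) (b := (b+1)/2) (by omega) (by omega) h
    omega

private def gr (m i j : ℕ) : ZMod m := (i : ZMod m) + zig m j

private lemma zig_sum (m j : ℕ) :
    zig m j + zig m (j+1) = if Even j then 1 else 0 := by
  unfold zig
  by_cases p : Even j
  · have hj1 : ¬ Even (j+1) := by simp [Nat.even_add_one, p]
    rw [if_pos p, if_neg hj1, if_pos p]
    have h1 : (j+1+1)/2 = j/2 + 1 := by rw [Nat.even_iff] at p; omega
    rw [h1]; push_cast; ring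
  · have hj1 : Even (j+1) := by simp [Nat.even_add_one, p]
    rw [if_neg p, if_pos hj1, if_neg p]
    rw [show (j+1)/2 = (j+1)/2 from rfl]
    ring

private lemma zig_diff (m j : ℕ) :
    zig m (j+1) - zig m j = if Even j then ((j+1 : ℕ) : ZMod m) else -((j+1 : ℕ) : ZMod m) := by
  unfold zig
  by_cases p : Even j
  · have hj1 : ¬ Even (j+1) := by simp [Nat.even_add_one, p]
    rw [if_neg hj1, if_pos p, if_pos p]
    have h1 : (j+1+1)/2 = j/2 + 1 := by rw [Nat.even_iff] at p; omega
    have h2 : j/2 + 1 + j/2 = j + 1 := by rw [Nat.even_iff] at p; omega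
    rw [h1]
    rw [show ((j+1 : ℕ) : ZMod m) = ((j/2 + 1 + j/2 : ℕ) : ZMod m) by rw [h2]]
    push_cast; ring
  · have hj1 : Even (j+1) := by simp [Nat.even_add_one, p]
    rw [if_pos hj1, if_neg p, if_neg p]
    have h2 : (j+1)/2 + (j+1)/2 = j + 1 := by rw [Nat.not_even_iff] at p; omega
    rw [show ((j+1 : ℕ) : ZMod m) = (((j+1)/2 + (j+1)/2 : ℕ) : ZMod m) by rw [h2]]
    push_cast; ring

private lemma gr_inj {n : ℕ} (hn : 0 < n) (i : ℕ) {a b : ℕ} (ha : a < 2*n) (hb : b < 2*n)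
    (h : gr (2*n) i a = gr (2*n) i b) : a = b :=
  zig_inj hn ha hb (by unfold gr at h; exact add_left_cancel h)

private lemma dvd_eq_of_bounds {n c : ℕ} (h : 2*n ∣ c) (h1 : 0 < c) (h2 : c < 4*n) : c = 2*n := by
  obtain ⟨k, rfl⟩ := h
  rcases k with _ | _ | k
  · omega
  · omega
  · exfalso
    have : 2*n*2 ≤ 2*n*(k+1+1) := Nat.mul_le_mul_left _ (by omega)
    omega

private lemma double_inj {n i i' : ℕ} (hi : i < n) (hi' : i' < n)
    (h : (i : ZMod (2*n)) + i = (i' : ZMod (2*n)) + i') : i = i' := by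
  have h' : ((i+i : ℕ) : ZMod (2*n)) = ((i'+i' : ℕ) : ZMod (2*n)) := by
    push_cast; linear_combination h
  have := cast_inj_lt (by omega) (by omega) h'
  omega

private lemma succ_cast_inj {n j j' : ℕ} (hj : j < 2*n-1) (hj' : j' < 2*n-1)
    (h : ((j+1 : ℕ) : ZMod (2*n)) = ((j'+1 : ℕ) : ZMod (2*n))) : j = j' := by
  have := cast_inj_lt (by omega) (by omega) h
  omega

private lemma opp_sum {n j j' : ℕ} (hn : 0 < n) (hj : j < 2*n-1) (hj' : j' < 2*n-1)
    (h : ((j+1 : ℕ) : ZMod (2*n)) = -((j'+1 : ℕ) : ZMod (2*n))) : j + j' + 2 = 2*n := by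
  have h0 : (((j+1) + (j'+1) : ℕ) : ZMod (2*n)) = 0 := by
    push_cast at h ⊢; linear_combination h
  have := dvd_eq_of_bounds (cast_zero_dvd h0) (by omega) (by omega)
  omega

private lemma key {n : ℕ} (hn : 0 < n) {i i' j j' : ℕ} (hi : i < n) (hi' : i' < n)
    (hj : j < 2*n-1) (hj' : j' < 2*n-1)
    (h : s(gr (2*n) i j, gr (2*n) i (j+1)) = s(gr (2*n) i' j', gr (2*n) i' (j'+1))) :
    i = i' ∧ j = j' := by
  rw [Sym2.eq_iff] at h
  rcases h with ⟨h1, h2⟩ | ⟨h1, h2⟩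
  · have S : (i : ZMod (2*n)) + i + (if Even j then 1 else 0)
        = (i' : ZMod (2*n)) + i' + (if Even j' then 1 else 0) := by
      unfold gr at h1 h2
      linear_combination h1 + h2 - zig_sum (2*n) j + zig_sum (2*n) j'
    have D : (if Even j then ((j+1 : ℕ) : ZMod (2*n)) else -((j+1 : ℕ) : ZMod (2*n)))
        = (if Even j' then ((j'+1 : ℕ) : ZMod (2*n)) else -((j'+1 : ℕ) : ZMod (2*n))) := by
      unfold gr at h1 h2
      linear_combination h2 - h1 - zig_diff (2*n) j + zig_diff (2*n) j'
    by_cases pj : Even j <;> by_cases pj' : Even j'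
    · rw [if_pos pj, if_pos pj'] at S D
      refine ⟨double_inj hi hi' (by linear_combination S), succ_cast_inj hj hj' D⟩
    · rw [if_pos pj, if_neg pj'] at D
      exfalso
      have := opp_sum hn hj hj' D
      rw [Nat.even_iff] at pj; rw [Nat.not_even_iff] at pj'
      omega
    · rw [if_neg pj, if_pos pj'] at D
      exfalso
      have := opp_sum hn hj' hj (by linear_combination -D)
      rw [Nat.not_even_iff] at pj; rw [Nat.even_iff] at pj'
      omega
    · rw [if_neg pj, if_neg pj'] at S D
      refine ⟨double_inj hi hi' (by linear_combination S), succ_cast_inj hj hj' (neg_injective D)⟩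
  · have S : (i : ZMod (2*n)) + i + (if Even j then 1 else 0)
        = (i' : ZMod (2*n)) + i' + (if Even j' then 1 else 0) := by
      unfold gr at h1 h2
      linear_combination h1 + h2 - zig_sum (2*n) j + zig_sum (2*n) j'
    have D : (if Even j then ((j+1 : ℕ) : ZMod (2*n)) else -((j+1 : ℕ) : ZMod (2*n)))
        = -(if Even j' then ((j'+1 : ℕ) : ZMod (2*n)) else -((j'+1 : ℕ) : ZMod (2*n))) := by
      unfold gr at h1 h2
      linear_combination h2 - h1 - zig_diff (2*n) j - zig_diff (2*n) j'
    exfalso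
    by_cases pj : Even j <;> by_cases pj' : Even j'
    · rw [if_pos pj, if_pos pj'] at S D
      have hs := opp_sum hn hj hj' D
      have hii := double_inj hi hi' (by linear_combination S)
      subst hii
      have := gr_inj hn i (by omega : j < 2*n) (by omega : j'+1 < 2*n) h1
      omega
    · rw [if_pos pj, if_neg pj'] at D
      have := succ_cast_inj hj hj' (by linear_combination D)
      rw [Nat.even_iff] at pj; rw [Nat.not_even_iff] at pj'
      omega
    · rw [if_neg pj, if_pos pj'] at D
      have := succ_cast_inj hj hj' (by linear_combination -D)
      rw [Nat.not_even_iff] at pj; rw [Nat.even_iff] at pj'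
      omega
    · rw [if_neg pj, if_neg pj'] at S D
      have hs := opp_sum hn hj' hj (by linear_combination -D)
      have hii := double_inj hi hi' (by linear_combination S)
      subst hii
      have := gr_inj hn i (by omega : j < 2*n) (by omega : j'+1 < 2*n) h1
      omega

lemma exists_walk_of_injOn {V : Type*} [DecidableEq V] (f : ℕ → V) (k : ℕ)
    (hinj : ∀ a ≤ k, ∀ b ≤ k, f a = f b → a = b) :
    ∃ w : (⊤ : SimpleGraph V).Walk (f 0) (f k),
      w.support = (List.range (k+1)).map f ∧
      w.edges = (List.range k).map (fun j => s(f j, f (j+1))) := by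
  induction k with
  | zero => exact ⟨Walk.nil, by simp [List.range_succ], by simp⟩
  | succ k ih =>
    obtain ⟨w, hs, he⟩ := ih (fun a ha b hb => hinj a (ha.trans (Nat.le_succ k)) b (hb.trans (Nat.le_succ k)))
    have hadj : (⊤ : SimpleGraph V).Adj (f k) (f (k+1)) := by
      simp only [top_adj]
      intro h
      exact (Nat.succ_ne_self k).symm (hinj k (Nat.le_succ k) (k+1) le_rfl h)
    refine ⟨w.concat hadj, ?_, ?_⟩
    · rw [Walk.support_concat, hs, List.range_succ, List.map_append]
      simp [List.concat_eq_append, List.range_succ]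
    · rw [Walk.edges_concat, he, List.range_succ, List.map_append]
      simp [List.concat_eq_append]

/-- For every even `m ≥ 2`, the edge set of `K_m` decomposes into
`m/2` Hamiltonian paths. -/
theorem completeGraph_hamiltonian_path_decomposition (m : ℕ) (hm : 2 ≤ m) (hme : Even m) :
    ∃ P : Fin (m / 2) → Set (Sym2 (Fin m)),
      (∀ i j, i ≠ j → Disjoint (P i) (P j)) ∧
      (⋃ i, P i) = (⊤ : SimpleGraph (Fin m)).edgeSet ∧
      (∀ i, ∃ (a b : Fin m) (w : (⊤ : SimpleGraph (Fin m)).Walk a b),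
        w.IsPath ∧ w.IsHamiltonian ∧ P i = {e | e ∈ w.edges}) := by
  classical
  obtain ⟨n, hn2⟩ := hme
  have hmn : m = 2*n := by omega
  subst hmn
  have hn : 0 < n := by omega
  haveI : NeZero (2*n) := ⟨by omega⟩
  have hhalf : 2*n/2 = n := by omega
  set q : ZMod (2*n) → Fin (2*n) := fun x => (⟨x.val, ZMod.val_lt x⟩ : Fin (2*n)) with hq
  have qinj : Function.Injective q := fun x y h => ZMod.val_injective _ (congrArg Fin.val h)
  set F : ℕ → ℕ → Fin (2*n) := fun i j => q (gr (2*n) i j) with hF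
  have Finj : ∀ i : ℕ, ∀ a < 2*n, ∀ b < 2*n, F i a = F i b → a = b :=
    fun i a ha b hb h => gr_inj hn i ha hb (qinj h)
  have keyF : ∀ i i' j j' : ℕ, i < n → i' < n → j < 2*n-1 → j' < 2*n-1 →
      s(F i j, F i (j+1)) = s(F i' j', F i' (j'+1)) → i = i' ∧ j = j' := by
    intro i i' j j' hi hi' hj hj' h
    refine key hn hi hi' hj hj' (Sym2.map.injective qinj ?_)
    rwa [Sym2.map_pair_eq, Sym2.map_pair_eq]
  have hwalk : ∀ i : ℕ, ∃ w : (⊤ : SimpleGraph (Fin (2*n))).Walk (F i 0) (F i (2*n-1)),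
      w.support = (List.range (2*n)).map (F i) ∧
      w.edges = (List.range (2*n-1)).map (fun j => s(F i j, F i (j+1))) := by
    intro i
    obtain ⟨w, hs, he⟩ := exists_walk_of_injOn (F i) (2*n-1)
      (fun a ha b hb h => Finj i a (by omega) b (by omega) h)
    refine ⟨w, ?_, he⟩
    rw [hs, show 2*n-1+1 = 2*n by omega]
  choose w hws hwe using hwalk
  refine ⟨fun i => {e | e ∈ (w i.val).edges}, ?_, ?_, ?_⟩
  · -- disjointness
    intro i i' hne
    rw [Set.disjoint_left]
    intro e he he'
    simp only [Set.mem_setOf_eq, hwe, List.mem_map, List.mem_range] at he he'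
    obtain ⟨j, hj, rfl⟩ := he
    obtain ⟨j', hj', hee⟩ := he'
    have hi : i.val < n := by have := i.isLt; omega
    have hi' : i'.val < n := by have := i'.isLt; omega
    exact hne (Fin.ext (keyF i'.val i.val j' j hi' hi hj' hj hee).1.symm)
  · -- union is edge set
    set T : Finset (Sym2 (Fin (2*n))) :=
      ((Finset.range n) ×ˢ (Finset.range (2*n-1))).image
        (fun p => s(F p.1 p.2, F p.1 (p.2+1))) with hT
    have hTcard : T.card = n * (2*n-1) := by
      rw [hT, Finset.card_image_of_injOn, Finset.card_product, Finset.card_range,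
        Finset.card_range]
      intro p hp p' hp' hpp
      simp only [Finset.mem_coe, Finset.mem_product, Finset.mem_range] at hp hp'
      have := keyF p.1 p'.1 p.2 p'.2 hp.1 hp'.1 hp.2 hp'.2 hpp
      exact Prod.ext this.1 this.2
    have hTsub : T ⊆ (⊤ : SimpleGraph (Fin (2*n))).edgeFinset := by
      intro e he
      rw [hT, Finset.mem_image] at he
      obtain ⟨⟨a, b⟩, hab, rfl⟩ := he
      simp only [Finset.mem_product, Finset.mem_range] at hab
      rw [SimpleGraph.mem_edgeFinset, SimpleGraph.mem_edgeSet, SimpleGraph.top_adj]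
      intro hcontra
      have := Finj a b (by omega) (b+1) (by omega) hcontra
      omega
    have hcardE : (⊤ : SimpleGraph (Fin (2*n))).edgeFinset.card = n*(2*n-1) := by
      rw [SimpleGraph.card_edgeFinset_top_eq_card_choose_two, Fintype.card_fin,
        Nat.choose_two_right, show 2*n*(2*n-1) = (n*(2*n-1))*2 by ring,
        Nat.mul_div_cancel _ (by norm_num)]
    have hTE : T = (⊤ : SimpleGraph (Fin (2*n))).edgeFinset :=
      Finset.eq_of_subset_of_card_le hTsub (by rw [hTcard, hcardE])
    have hcoe : (⋃ i : Fin (2*n/2), {e | e ∈ (w i.val).edges}) = (↑T : Set (Sym2 (Fin (2*n)))) := by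
      ext e
      simp only [Set.mem_iUnion, Set.mem_setOf_eq, hwe, List.mem_map, List.mem_range,
        hT, Finset.coe_image, Set.mem_image, Finset.mem_coe, Finset.mem_product,
        Finset.mem_range]
      constructor
      · rintro ⟨i, j, hj, rfl⟩
        exact ⟨(i.val, j), ⟨by have := i.isLt; omega, hj⟩, rfl⟩
      · rintro ⟨⟨a, b⟩, ⟨ha, hb⟩, rfl⟩
        exact ⟨⟨a, by omega⟩, b, hb, rfl⟩
    rw [hcoe, hTE, SimpleGraph.coe_edgeFinset]
  · -- each is a hamiltonian path
    intro i
    have hpath : (w i.val).IsPath := by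
      rw [SimpleGraph.Walk.isPath_def, hws]
      exact List.Nodup.map_on
        (fun x hx y hy h => Finj i.val x (by simpa using List.mem_range.mp hx) y
          (by simpa using List.mem_range.mp hy) h)
        List.nodup_range
    refine ⟨F i.val 0, F i.val (2*n-1), w i.val, hpath, ?_, rfl⟩
    rw [hpath.isHamiltonian_iff]
    intro v
    rw [hws, List.mem_map]
    have hsurj := Finset.surj_on_of_inj_on_of_card_le
      (s := Finset.range (2*n)) (t := (Finset.univ : Finset (Fin (2*n))))
      (fun a _ => F i.val a)
      (fun a ha => Finset.mem_univ _)
      (fun a₁ a₂ ha₁ ha₂ h => Finj i.val a₁ (Finset.mem_range.mp ha₁) a₂ (Finset.mem_range.mp ha₂) h)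
      (by simp)
    obtain ⟨j, hj, hjv⟩ := hsurj v (Finset.mem_univ v)
    exact ⟨j, List.mem_range.mpr (Finset.mem_range.mp hj), hjv.symm⟩
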